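/- If two rational numbers p = d(Ā)/d(A) and q = d(B̄)/d(B) coming from admissible linear chains A and B are equal, then A = B (the chains have the same length and the same entries). -/

import Mathlib

/-- The tridiagonal matrix of a linear chain: diagonal entries from the list,
entries `-1` on the first sub- and super-diagonals, `0` elsewhere. -/
def chainMatrix (l : List ℤ) : Matrix (Fin l.length) (Fin l.length) ℤ :=
  fun i j =>
    if i = j then l.get i
    else if (i : ℕ) + 1 = (j : ℕ) ∨ (j : ℕ) + 1 = (i : ℕ) then -1 else 0

/-- The discriminant of a linear chain. -/
def disc (l : List ℤ) : ℤ := (chainMatrix l).det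

/-- A linear chain is admissible if it is nonempty and all entries are ≥ 2. -/
def Admissible (l : List ℤ) : Prop := l ≠ [] ∧ ∀ a ∈ l, 2 ≤ a

/-- The inductance of a chain. -/
def ind (l : List ℤ) : ℚ := (disc l.tail : ℚ) / (disc l : ℚ)

lemma disc_nil : disc [] = 1 := by
  simp [disc, Matrix.det_isEmpty]

lemma disc_singleton (a : ℤ) : disc [a] = a := by
  simp [disc, Matrix.det_fin_one, chainMatrix]

lemma chainMatrix_succ_succ (a : ℤ) (l : List ℤ) (i j : Fin l.length) :
    chainMatrix (a :: l) i.succ j.succ = chainMatrix l i j := by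
  simp only [chainMatrix, Fin.val_succ]
  split_ifs with h1 h2 h3 h4 <;> simp_all [Fin.ext_iff]


lemma disc_cons₂ (a b : ℤ) (t : List ℤ) :
    disc (a :: b :: t) = a * disc (b :: t) - disc t := by
  set n := t.length with hn
  let M : Matrix (Fin (n + 2)) (Fin (n + 2)) ℤ := chainMatrix (a :: b :: t)
  have hd : disc (a :: b :: t) = M.det := rfl
  rw [hd, Matrix.det_succ_row_zero]
  rw [Fin.sum_univ_succ, Fin.sum_univ_succ]
  have hzero : ∀ j : Fin n, M 0 (j.succ.succ) = 0 := by
    intro j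
    simp [M, chainMatrix, Fin.ext_iff]
  have hs : ∀ j : Fin n, (-1 : ℤ) ^ ((j.succ.succ : Fin (n+2)) : ℕ) * M 0 (j.succ.succ) *
      (M.submatrix Fin.succ (j.succ.succ).succAbove).det = 0 := by
    intro j; rw [hzero]; ring
  rw [Finset.sum_eq_zero (fun j _ => hs j)]
  simp only [add_zero]
  have e0 : M 0 0 = a := rfl
  have e1 : M 0 (Fin.succ 0) = -1 := rfl
  have sub0 : (M.submatrix Fin.succ (0 : Fin (n+2)).succAbove) = chainMatrix (b :: t) := by
    ext i j
    show M i.succ ((0 : Fin (n+2)).succAbove j) = _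
    rw [Fin.zero_succAbove]
    exact chainMatrix_succ_succ a (b :: t) i j
  have sub1 : (M.submatrix Fin.succ ((0 : Fin (n+1)).succ).succAbove).det = - disc t := by
    rw [Matrix.det_succ_column_zero, Fin.sum_univ_succ]
    have hz : ∀ i : Fin n, (M.submatrix Fin.succ ((0 : Fin (n+1)).succ).succAbove) i.succ 0 = 0 := by
      intro i
      show M i.succ.succ (((0 : Fin (n+1)).succ).succAbove 0) = 0
      have : ((0 : Fin (n+1)).succ).succAbove 0 = 0 := rfl
      rw [this]
      simp [M, chainMatrix, Fin.ext_iff]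
    rw [Finset.sum_eq_zero (fun i _ => by rw [hz i]; ring), add_zero]
    have hv : (M.submatrix Fin.succ ((0 : Fin (n+1)).succ).succAbove) 0 0 = -1 := rfl
    rw [hv]
    have inner : ((M.submatrix Fin.succ ((0 : Fin (n+1)).succ).succAbove).submatrix
        (0 : Fin (n+1)).succAbove Fin.succ) = chainMatrix t := by
      ext i j
      show M ((0 : Fin (n+1)).succAbove i).succ (((0 : Fin (n+1)).succ).succAbove j.succ) = _
      rw [Fin.zero_succAbove, Fin.succ_succAbove_succ, Fin.zero_succAbove]
      show chainMatrix (a :: b :: t) i.succ.succ j.succ.succ = chainMatrix t i j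
      rw [chainMatrix_succ_succ a (b :: t) i.succ j.succ, chainMatrix_succ_succ b t i j]
    rw [inner]
    simp [disc]
  rw [e0, e1, sub0, sub1]
  show (-1:ℤ)^(0:ℕ) * a * disc (b :: t) + (-1:ℤ)^((Fin.succ 0 : Fin (n+2)) : ℕ) * (-1) * (-disc t)
      = a * disc (b :: t) - disc t
  norm_num
  ring

lemma disc_tail_lt (l : List ℤ) (hl : Admissible l) :
    0 < disc l.tail ∧ disc l.tail < disc l := by
  induction l with
  | nil => exact absurd rfl hl.1
  | cons a l ih =>
    have ha : 2 ≤ a := hl.2 a (by simp)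
    cases l with
    | nil => simpa [disc_nil, disc_singleton] using by omega
    | cons b t =>
      have hl' : Admissible (b :: t) := ⟨by simp, fun x hx => hl.2 x (by simp [hx])⟩
      obtain ⟨h1, h2⟩ := ih hl'
      simp only [List.tail_cons] at h1 h2
      rw [List.tail_cons, disc_cons₂]
      constructor
      · omega
      · nlinarith

lemma disc_pos (l : List ℤ) (hl : Admissible l) : 0 < disc l := by
  obtain ⟨h1, h2⟩ := disc_tail_lt l hl; omega

lemma ind_mem (l : List ℤ) (hl : Admissible l) : 0 < ind l ∧ ind l < 1 := by
  obtain ⟨h1, h2⟩ := disc_tail_lt l hl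
  unfold ind
  constructor
  · apply div_pos <;> [exact_mod_cast h1; exact_mod_cast (h1.trans h2)]
  · rw [div_lt_one (by exact_mod_cast h1.trans h2)]
    exact_mod_cast h2

lemma ind_cons (a : ℤ) (l : List ℤ) (hl : Admissible l) :
    ind (a :: l) = 1 / ((a : ℚ) - ind l) := by
  have h1 := disc_pos l hl
  obtain ⟨c, t, rfl⟩ : ∃ c t, l = c :: t := by
    cases l with
    | nil => exact absurd rfl hl.1
    | cons c t => exact ⟨c, t, rfl⟩
  unfold ind
  rw [List.tail_cons, disc_cons₂]
  have h1' : ((disc (c :: t) : ℤ) : ℚ) ≠ 0 := by exact_mod_cast h1.ne'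
  have h2 : ((a : ℚ) - (disc t : ℚ) / (disc (c :: t) : ℚ)) ≠ 0 := by
    rw [sub_ne_zero]
    intro he
    have hm := ind_mem (c :: t) hl
    unfold ind at hm
    simp only [List.tail_cons] at hm
    rw [← he] at hm
    have : (0:ℚ) < (a:ℚ) := hm.1
    have : (a:ℚ) < 1 := hm.2
    have : (0:ℤ) < a := by exact_mod_cast hm.1
    have : (a:ℤ) < 1 := by exact_mod_cast hm.2
    omega
  field_simp
  rw [List.tail_cons]; push_cast; ring

lemma ind_singleton (a : ℤ) : ind [a] = 1 / (a : ℚ) := by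
  simp [ind, disc_nil, disc_singleton]

lemma admissible_tail (a : ℤ) (l : List ℤ) (h : Admissible (a :: l)) (hl : l ≠ []) :
    Admissible l := ⟨hl, fun x hx => h.2 x (List.mem_cons_of_mem a hx)⟩

lemma key (c : ℤ) (l : List ℤ) (hcl : Admissible (c :: l)) :
    ∃ x : ℚ, ind (c :: l) = 1 / ((c : ℚ) - x) ∧ 0 ≤ x ∧ x < 1 ∧ (l = [] ↔ x = 0) ∧
      (l ≠ [] → x = ind l) := by
  cases l with
  | nil => exact ⟨0, by rw [ind_singleton]; norm_num, le_refl 0, one_pos, by simp, by simp⟩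
  | cons d t =>
    have hl : Admissible (d :: t) := admissible_tail c _ hcl (by simp)
    obtain ⟨p1, p2⟩ := ind_mem _ hl
    exact ⟨ind (d :: t), ind_cons c _ hl, p1.le, p2,
      by simp [p1.ne'], fun _ => rfl⟩

theorem ind_injective (A B : List ℤ) (hA : Admissible A) (hB : Admissible B)
    (h : ind A = ind B) : A = B := by
  induction A generalizing B with
  | nil => exact absurd rfl hA.1
  | cons a A' ih =>
    obtain ⟨b, B', rfl⟩ : ∃ b B', B = b :: B' := by
      cases B with
      | nil => exact absurd rfl hB.1
      | cons b B' => exact ⟨b, B', rfl⟩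
    have ha : (2:ℚ) ≤ (a:ℚ) := by exact_mod_cast hA.2 a (by simp)
    have hb : (2:ℚ) ≤ (b:ℚ) := by exact_mod_cast hB.2 b (by simp)
    obtain ⟨x, hx, hx0, hx1, hxe, hxi⟩ := key a A' hA
    obtain ⟨y, hy, hy0, hy1, hye, hyi⟩ := key b B' hB
    rw [hx, hy] at h
    have hax : (0:ℚ) < (a:ℚ) - x := by linarith
    have hby : (0:ℚ) < (b:ℚ) - y := by linarith
    rw [div_eq_div_iff hax.ne' hby.ne'] at h
    have hab : (a:ℚ) - (b:ℚ) = x - y := by linarith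
    have heq : a = b := by
      have h4 : ((a - b : ℤ) : ℚ) < 1 := by push_cast; linarith
      have h5 : (-1 : ℚ) < ((a - b : ℤ) : ℚ) := by push_cast; linarith
      have h4' : (a - b : ℤ) < 1 := by exact_mod_cast h4
      have h5' : (-1 : ℤ) < (a - b : ℤ) := by exact_mod_cast h5
      omega
    subst heq
    have hxy : x = y := by linarith
    by_cases hA' : A' = []
    · have : x = 0 := hxe.mp hA'
      have : y = 0 := by rw [← hxy]; exact this
      rw [hA', hye.mpr this]
    · have hB' : B' ≠ [] := by
        intro hB'e
        have : y = 0 := hye.mp hB'e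
        exact hA' (hxe.mpr (by rw [hxy, this]))
      have := ih B' (admissible_tail a A' hA hA') (admissible_tail a B' hB hB')
        (by rw [← hxi hA', ← hyi hB', hxy])
      rw [this]
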